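/- Let m be an odd natural number and let A be the 4m × 4m matrix over 𝔽₂ given by the block-diagonal direct sum of m copies of the 4 × 4 companion-type matrix C = !![0,0,0,1; 1,0,0,0; 0,1,0,0; 0,0,1,1]. Then there do not exist matrices P and Q in M_{4m}(𝔽₂) with P² = P, Q³ = 0, and A = P + Q. -/
import Mathlib

theorem stmt_0 (m : ℕ) (hm : Odd m)
    (C : Matrix (Fin 4) (Fin 4) (ZMod 2))
    (hC : C = !![0,0,0,1; 1,0,0,0; 0,1,0,0; 0,0,1,1])
    (A : Matrix (Fin (4 * m)) (Fin (4 * m)) (ZMod 2))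
    (hA : A = Matrix.reindex finProdFinEquiv finProdFinEquiv
      (Matrix.blockDiagonal (fun _ : Fin m => C))) :
    ¬ ∃ P Q : Matrix (Fin (4 * m)) (Fin (4 * m)) (ZMod 2),
      P ^ 2 = P ∧ Q ^ 3 = 0 ∧ A = P + Q := by
  rintro ⟨P, Q, hP, hQ, hsum⟩
  have htwo : ∀ x : ZMod 2, x + x = 0 := by decide
  -- basic rewrites
  have hPP : P * P = P := by rw [← pow_two]; exact hP
  have hPP0 : P + P = 0 := by ext i j; exact htwo _
  have hQeq : Q = A + P := by rw [hsum, add_comm P Q, add_assoc, hPP0, add_zero]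
  have hQ3 : Q * Q * Q = 0 := by
    rw [show Q * Q * Q = Q ^ 3 by rw [pow_succ, pow_succ, pow_one]]; exact hQ
  -- structural facts about A
  have hpow : ∀ k : ℕ, A ^ k = Matrix.reindex finProdFinEquiv finProdFinEquiv
      (Matrix.blockDiagonal (fun _ : Fin m => C ^ k)) := by
    intro k
    rw [hA, ← Matrix.reindexAlgEquiv_apply (ZMod 2), ← Matrix.reindexAlgEquiv_apply (ZMod 2),
      ← map_pow, ← Matrix.blockDiagonal_pow]
    rfl
  have htrace : ∀ k : ℕ, Matrix.trace (A ^ k) =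
      (m : ZMod 2) * Matrix.trace (C ^ k) := by
    intro k
    rw [hpow k, Matrix.reindex_apply]
    have h1 : Matrix.trace ((Matrix.blockDiagonal (fun _ : Fin m => C ^ k)).submatrix
        finProdFinEquiv.symm finProdFinEquiv.symm)
        = Matrix.trace (Matrix.blockDiagonal (fun _ : Fin m => C ^ k)) := by
      simp only [Matrix.trace, Matrix.diag, Matrix.submatrix_apply]
      exact Fintype.sum_equiv finProdFinEquiv.symm _ _ (fun i => rfl)
    rw [h1, Matrix.trace_blockDiagonal, Finset.sum_const, Finset.card_univ, Fintype.card_fin,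
      nsmul_eq_mul]
  have hmcast : (m : ZMod 2) = 1 := by
    obtain ⟨k, hk⟩ := hm
    subst hk
    push_cast
    rw [show (2 : ZMod 2) = 0 by decide]
    ring
  have hC4 : C ^ 4 = C ^ 3 + 1 := by rw [hC]; decide
  have hA4 : A ^ 4 = A ^ 3 + 1 := by
    rw [hpow 4, hpow 3, hC4,
      show (fun _ : Fin m => C ^ 3 + 1) = (fun _ : Fin m => C ^ 3) + (fun _ : Fin m => 1)
        from rfl,
      Matrix.blockDiagonal_add,
      show (fun _ : Fin m => (1 : Matrix (Fin 4) (Fin 4) (ZMod 2))) = 1 from rfl,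
      Matrix.blockDiagonal_one]
    simp [Matrix.reindex_apply, Matrix.submatrix_add, Matrix.submatrix_one_equiv]
  have htr3 : Matrix.trace (A * A * A) = 1 := by
    rw [show A * A * A = A ^ 3 by rw [pow_succ, pow_succ, pow_one], htrace 3, hmcast, hC,
      show (!![0,0,0,1; 1,0,0,0; 0,1,0,0; 0,0,1,1] : Matrix (Fin 4) (Fin 4) (ZMod 2)) ^ 3
        = !![0,0,0,1; 1,0,0,0; 0,1,0,0; 0,0,1,1] *
          (!![0,0,0,1; 1,0,0,0; 0,1,0,0; 0,0,1,1] * !![0,0,0,1; 1,0,0,0; 0,1,0,0; 0,0,1,1])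
        by rw [pow_succ, pow_succ, pow_one, mul_assoc]]
    decide
  -- expansion of Q^3
  have e1 : Q * Q * Q = A*A*A + A*A*P + A*P*A + P*A*A + A*(P*P) + P*A*P + P*P*A + P*P*P := by
    rw [hQeq]; noncomm_ring
  simp only [hPP] at e1
  -- e1 : Q*Q*Q = A*A*A + A*A*P + A*P*A + P*A*A + A*P + P*A*P + P*A + P
  have e2 : Q * Q * Q * (A * P)
      = A*A*A*A*P + A*A*P*A*P + A*P*A*A*P + P*A*A*A*P + A*P*A*P + P*A*P*A*P
        + P*A*A*P + P*A*P := by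
    rw [e1]; noncomm_ring
  -- trace rotation lemmas
  have r1 : Matrix.trace (A*P*A) = Matrix.trace (A*A*P) := by
    rw [Matrix.trace_mul_comm, ← mul_assoc]
  have r2 : Matrix.trace (P*A*A) = Matrix.trace (A*A*P) := by
    rw [mul_assoc, Matrix.trace_mul_comm]
  have r3 : Matrix.trace (P*A*P) = Matrix.trace (A*P) := by
    rw [Matrix.trace_mul_comm, ← mul_assoc, hPP, Matrix.trace_mul_comm]
  have r4 : Matrix.trace (P*A) = Matrix.trace (A*P) := Matrix.trace_mul_comm _ _
  have r5 : Matrix.trace (A*A*A*A*P) = Matrix.trace (A*A*A*P) + Matrix.trace P := by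
    rw [show A*A*A*A*P = A^4 * P by noncomm_ring, hA4, add_mul, one_mul, Matrix.trace_add,
      show A^3 * P = A*A*A*P by noncomm_ring]
  have r6 : Matrix.trace (A*P*A*A*P) = Matrix.trace (A*A*P*A*P) := by
    rw [show A*P*A*A*P = (A*P)*(A*A*P) by noncomm_ring, Matrix.trace_mul_comm,
      show (A*A*P)*(A*P) = A*A*P*A*P by noncomm_ring]
  have r7 : Matrix.trace (P*A*A*A*P) = Matrix.trace (A*A*A*P) := by
    rw [show P*A*A*A*P = P*(A*A*A*P) by noncomm_ring, Matrix.trace_mul_comm,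
      show (A*A*A*P)*P = A*A*A*(P*P) by noncomm_ring, hPP]
  have r8 : Matrix.trace (P*A*P*A*P) = Matrix.trace (A*P*A*P) := by
    rw [show P*A*P*A*P = P*(A*P*A*P) by noncomm_ring, Matrix.trace_mul_comm,
      show (A*P*A*P)*P = A*P*A*(P*P) by noncomm_ring, hPP]
  have r9 : Matrix.trace (P*A*A*P) = Matrix.trace (A*A*P) := by
    rw [show P*A*A*P = P*(A*A*P) by noncomm_ring, Matrix.trace_mul_comm,
      show (A*A*P)*P = A*A*(P*P) by noncomm_ring, hPP]
  -- trace of Q^3 = 0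
  have T1 : Matrix.trace (A*A*A) + Matrix.trace (A*A*P) + Matrix.trace (A*P)
      + Matrix.trace P = 0 := by
    have h := congrArg Matrix.trace e1
    rw [hQ3, Matrix.trace_zero] at h
    simp only [Matrix.trace_add] at h
    rw [r1, r2, r3, r4] at h
    linear_combination -h - htwo (Matrix.trace (A*A*P)) - htwo (Matrix.trace (A*P))
  -- trace of Q^3 * (A*P) = 0
  have T2 : Matrix.trace P + Matrix.trace (A*A*P) + Matrix.trace (A*P) = 0 := by
    have h := congrArg Matrix.trace e2
    rw [hQ3, zero_mul, Matrix.trace_zero] at h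
    simp only [Matrix.trace_add] at h
    rw [r5, r6, r7, r8, r9, r3] at h
    linear_combination -h - htwo (Matrix.trace (A*A*A*P)) - htwo (Matrix.trace (A*A*P*A*P))
      - htwo (Matrix.trace (A*P*A*P))
  have : (1 : ZMod 2) = 0 := by
    linear_combination (-htr3 + T1 + T2 - htwo (Matrix.trace (A*A*P))
      - htwo (Matrix.trace (A*P)) - htwo (Matrix.trace P))
  exact one_ne_zero this
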